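/- Let π be a probability measure on ℝ^d and η : {(x,y) ∈ ℝ^d×ℝ^d : x ≠ y} → [0,∞) be measurable with M := sup_{y∈ℝ^d} ∫ min(1, |x−y|²) η(x,y) dπ(x) < ∞. Let μ be a probability measure with μ ≪ π whose density f = dμ/dπ is everywhere positive and satisfies, for some constants C_f, C_g ≥ 0 and all x, y ∈ ℝ^d: |f(x) − f(y)| ≤ C_f · min(1, |x−y|) and |log f(x) − log f(y)| ≤ C_g · min(1, |x−y|). Then I_η(μ∣π) ≤ (C_f·C_g/2)·M; in particular, I_η(μ∣π) < ∞. -/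

import Mathlib

open MeasureTheory
open scoped ENNReal Classical

/-- The integrand of the nonlocal relative Fisher information:
`F(r,s) = (r−s)(log r − log s)` for `r,s > 0`, `F(0,0) = 0`, and
`F(r,0) = F(0,r) = ∞` for `r > 0`. -/
noncomputable def Fent (r s : ℝ) : ℝ≥0∞ :=
  if 0 < r ∧ 0 < s then ENNReal.ofReal ((r - s) * (Real.log r - Real.log s))
  else if r = 0 ∧ s = 0 then 0
  else ⊤

/-- The nonlocal Fisher information
`I_η(μ∣π) = (1/2) ∬_{x≠y} F(f(x),f(y)) η(x,y) dπ(x) dπ(y)` with `f = dμ/dπ` if `μ ≪ π`,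
and `∞` otherwise. -/
noncomputable def fisher {X : Type*} [MeasurableSpace X]
    (η : X → X → ℝ) (μ π : Measure X) : ℝ≥0∞ :=
  if μ ≪ π then
    (1/2 : ℝ≥0∞) * ∫⁻ x, ∫⁻ y,
      (if x ≠ y then
        Fent (μ.rnDeriv π x).toReal (μ.rnDeriv π y).toReal * ENNReal.ofReal (η x y)
       else 0) ∂π ∂π
  else ⊤

/-- **Finiteness of the nonlocal Fisher information for regular densities.**
If `M` bounds `sup_y ∫ min(1,|x−y|²) η(x,y) dπ(x)`, and `μ = f·π` with `f > 0`
satisfying `|f(x)−f(y)| ≤ C_f·min(1,|x−y|)` and `|log f(x)−log f(y)| ≤ C_g·min(1,|x−y|)`,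
then `I_η(μ∣π) ≤ (C_f·C_g/2)·M`. -/
theorem fisher_finite_of_regular_density {d : ℕ}
    (π : Measure (EuclideanSpace ℝ (Fin d))) [IsProbabilityMeasure π]
    (η : EuclideanSpace ℝ (Fin d) → EuclideanSpace ℝ (Fin d) → ℝ)
    (hηmeas : Measurable (Function.uncurry η)) (hηnonneg : ∀ x y, 0 ≤ η x y)
    (M : ℝ) (hM0 : 0 ≤ M)
    (hM : ∀ y, ∫⁻ x, ENNReal.ofReal (min 1 (‖x - y‖ ^ 2) * η x y) ∂π ≤ ENNReal.ofReal M)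
    (f : EuclideanSpace ℝ (Fin d) → ℝ) (hfmeas : Measurable f) (hfpos : ∀ x, 0 < f x)
    (μ : Measure (EuclideanSpace ℝ (Fin d))) [IsProbabilityMeasure μ]
    (hμ : μ = π.withDensity (fun x => ENNReal.ofReal (f x)))
    (Cf Cg : ℝ) (hCf : 0 ≤ Cf) (hCg : 0 ≤ Cg)
    (hf : ∀ x y, |f x - f y| ≤ Cf * min 1 ‖x - y‖)
    (hg : ∀ x y, |Real.log (f x) - Real.log (f y)| ≤ Cg * min 1 ‖x - y‖) :
    fisher η μ π ≤ ENNReal.ofReal (Cf * Cg / 2 * M) := by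
  have hfm' : Measurable fun x => ENNReal.ofReal (f x) := hfmeas.ennreal_ofReal
  have hac : μ ≪ π := by
    rw [hμ]; exact withDensity_absolutelyContinuous _ _
  have hrn : μ.rnDeriv π =ᵐ[π] fun x => ENNReal.ofReal (f x) := by
    rw [hμ]; exact Measure.rnDeriv_withDensity π hfm'
  rw [fisher, if_pos hac]
  set g : EuclideanSpace ℝ (Fin d) → EuclideanSpace ℝ (Fin d) → ℝ≥0∞ :=
    fun x y => ENNReal.ofReal (min 1 (‖x - y‖ ^ 2) * η x y) with hgdef
  have key : ∀ x y, (μ.rnDeriv π x) = ENNReal.ofReal (f x) →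
      (μ.rnDeriv π y) = ENNReal.ofReal (f y) →
      (if x ≠ y then
        Fent (μ.rnDeriv π x).toReal (μ.rnDeriv π y).toReal * ENNReal.ofReal (η x y)
       else 0) ≤ ENNReal.ofReal (Cf * Cg) * g x y := by
    intro x y hx hy
    split_ifs with hxy
    · have hFnn : 0 ≤ (f x - f y) * (Real.log (f x) - Real.log (f y)) := by
        rcases le_total (f x) (f y) with h | h
        · have := Real.log_le_log (hfpos x) h; nlinarith
        · have := Real.log_le_log (hfpos y) h; nlinarith
      have htx : (μ.rnDeriv π x).toReal = f x := by
        rw [hx, ENNReal.toReal_ofReal (hfpos x).le]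
      have hty : (μ.rnDeriv π y).toReal = f y := by
        rw [hy, ENNReal.toReal_ofReal (hfpos y).le]
      rw [htx, hty, Fent, if_pos ⟨hfpos x, hfpos y⟩, ← ENNReal.ofReal_mul hFnn,
        hgdef, ← ENNReal.ofReal_mul (mul_nonneg hCf hCg)]
      apply ENNReal.ofReal_le_ofReal
      have h1 : (f x - f y) * (Real.log (f x) - Real.log (f y)) ≤
          (Cf * min 1 ‖x - y‖) * (Cg * min 1 ‖x - y‖) := by
        calc (f x - f y) * (Real.log (f x) - Real.log (f y))
            ≤ |f x - f y| * |Real.log (f x) - Real.log (f y)| := by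
              rw [← abs_mul]; exact le_abs_self _
          _ ≤ (Cf * min 1 ‖x - y‖) * (Cg * min 1 ‖x - y‖) :=
              mul_le_mul (hf x y) (hg x y) (abs_nonneg _)
                (mul_nonneg hCf (le_min zero_le_one (norm_nonneg _)))
      have h2 : min 1 ‖x - y‖ * min 1 ‖x - y‖ = min 1 (‖x - y‖ ^ 2) := by
        rcases le_total ‖x - y‖ 1 with h | h
        · rw [min_eq_right h, min_eq_right (by nlinarith [norm_nonneg (x - y)]), sq]
        · rw [min_eq_left h, min_eq_left (by nlinarith), one_mul]
      calc (f x - f y) * (Real.log (f x) - Real.log (f y)) * η x y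
          ≤ (Cf * min 1 ‖x - y‖) * (Cg * min 1 ‖x - y‖) * η x y :=
            mul_le_mul_of_nonneg_right h1 (hηnonneg x y)
        _ = Cf * Cg * (min 1 (‖x - y‖ ^ 2) * η x y) := by rw [← h2]; ring
    · exact zero_le
  have hgm : Measurable (Function.uncurry g) := by
    apply Measurable.ennreal_ofReal
    exact (measurable_const.min
      (((measurable_fst.sub measurable_snd).norm).pow measurable_const)).mul hηmeas
  have step1 : (∫⁻ x, ∫⁻ y,
      (if x ≠ y then
        Fent (μ.rnDeriv π x).toReal (μ.rnDeriv π y).toReal * ENNReal.ofReal (η x y)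
       else 0) ∂π ∂π)
      ≤ ENNReal.ofReal (Cf * Cg) * ∫⁻ x, ∫⁻ y, g x y ∂π ∂π := by
    calc (∫⁻ x, ∫⁻ y,
        (if x ≠ y then
          Fent (μ.rnDeriv π x).toReal (μ.rnDeriv π y).toReal * ENNReal.ofReal (η x y)
         else 0) ∂π ∂π)
        ≤ ∫⁻ x, ∫⁻ y, ENNReal.ofReal (Cf * Cg) * g x y ∂π ∂π := by
          refine lintegral_mono_ae (hrn.mono fun x hx => ?_)
          exact lintegral_mono_ae (hrn.mono fun y hy => key x y hx hy)
      _ = ENNReal.ofReal (Cf * Cg) * ∫⁻ x, ∫⁻ y, g x y ∂π ∂π := by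
          simp_rw [lintegral_const_mul' _ _ ENNReal.ofReal_ne_top]
  have hswap : (∫⁻ x, ∫⁻ y, g x y ∂π ∂π) = ∫⁻ y, ∫⁻ x, g x y ∂π ∂π :=
    lintegral_lintegral_swap hgm.aemeasurable
  have step2 : (∫⁻ x, ∫⁻ y, g x y ∂π ∂π) ≤ ENNReal.ofReal M := by
    rw [hswap]
    calc (∫⁻ y, ∫⁻ x, g x y ∂π ∂π) ≤ ∫⁻ _, ENNReal.ofReal M ∂π :=
          lintegral_mono fun y => hM y
      _ = ENNReal.ofReal M := by simp
  calc _ = (1/2 : ℝ≥0∞) * ∫⁻ x, ∫⁻ y,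
      (if x ≠ y then
        Fent (μ.rnDeriv π x).toReal (μ.rnDeriv π y).toReal * ENNReal.ofReal (η x y)
       else 0) ∂π ∂π := by congr!
    _ ≤ (1/2 : ℝ≥0∞) * (ENNReal.ofReal (Cf * Cg) * ENNReal.ofReal M) := by
        refine mul_le_mul_right (step1.trans ?_) _
        exact mul_le_mul_right step2 _
    _ = ENNReal.ofReal (Cf * Cg / 2 * M) := by
        rw [← ENNReal.ofReal_mul (mul_nonneg hCf hCg),
          show (1/2 : ℝ≥0∞) = ENNReal.ofReal (1/2) by
            rw [ENNReal.ofReal_div_of_pos two_pos]; simp,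
          ← ENNReal.ofReal_mul (by norm_num)]
        ring_nf
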